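/- Let x₁,…,x_n ∈ ℝ^p, y₁,…,y_m ∈ ℝ^q, weights a ∈ (0,∞)^n, b ∈ (0,∞)^m, and ε, r > 0. Let φ₁, φ₂ be superlinear entropy functions. Define J(P, M) = −Σ_{i,j} ⟨M x_i, y_j⟩ P_{ij} + Σ_i a_i·φ₁(P_i/a_i) + Σ_j b_j·φ₂(P^j/b_j) + ε·Σ_{i,j} a_i b_j·φ_KL(P_{ij}/(a_i b_j)) for P ∈ [0,∞)^{n×m} and M ∈ F_r = {M ∈ ℝ^{q×p} : ‖M‖_F ≤ r}, where P_i = Σ_j P_{ij}, P^j = Σ_i P_{ij}, φ_KL(x) = x log x − x + 1. Consider the block coordinate descent sequence: P^{k+1} = argmin over P ≥ 0 of J(P, M_k), and M_{k+1} = M(P^{k+1}) := r·C(P^{k+1})/‖C(P^{k+1})‖_F where C(P) = Σ_{i,j} P_{ij}·y_j x_iᵀ (and M(P) = 0 if C(P) = 0). Then every limit point (M̄, P̄) of the sequence ((M_k, P^k)) is a blockwise minimum of J: P̄ minimizes P ↦ J(P, M̄) over [0,∞)^{n×m}, and M̄ minimizes M ↦ −Σ_{i,j} ⟨M x_i, y_j⟩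 P̄_{ij} over F_r; equivalently, (M̄, P̄) is a stationary point of the objective of the discrete CR_rUOT_ε problem. -/

import Mathlib

open Filter Set
open scoped ENNReal NNReal

noncomputable section

/-- The recession slope `φ'_∞ = lim_{x→∞} φ(x)/x` of an entropy function. -/
def phiRecession (φ : ℝ → ℝ≥0∞) : ℝ≥0∞ :=
  Filter.limsup (fun x : ℝ => φ x / ENNReal.ofReal x) Filter.atTop

/-- An entropy function: convex, lower semicontinuous `φ : [0,∞) → [0,∞]` with `φ(1) = 0`. -/
def IsEntropyFunction (φ : ℝ → ℝ≥0∞) : Prop :=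
  φ 1 = 0 ∧ LowerSemicontinuous φ ∧
    ∀ x ∈ Set.Ici (0 : ℝ), ∀ y ∈ Set.Ici (0 : ℝ), ∀ t ∈ Set.Icc (0 : ℝ) 1,
      φ (t * x + (1 - t) * y) ≤ ENNReal.ofReal t * φ x + ENNReal.ofReal (1 - t) * φ y

/-- The entropy function `φ_KL(x) = x log x − x + 1` generating the KL divergence. -/
def phiKL : ℝ → ℝ≥0∞ := fun x => ENNReal.ofReal (x * Real.log x - x + 1)

/-- The Frobenius norm of a real `q × p` matrix. -/
def frobNorm {q p : ℕ} (M : Matrix (Fin q) (Fin p) ℝ) : ℝ :=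
  Real.sqrt (∑ i, ∑ j, (M i j) ^ 2)

/-- The discrete objective
`J(P,M) = −Σ_{ij} ⟨Mx_i,y_j⟩ P_{ij} + Σ_i a_i φ₁(P_i/a_i) + Σ_j b_j φ₂(P^j/b_j)
          + ε Σ_{ij} a_i b_j φ_KL(P_{ij}/(a_i b_j))`. -/
def Jdisc {n m p q : ℕ} (x : Fin n → Fin p → ℝ) (y : Fin m → Fin q → ℝ)
    (a : Fin n → ℝ) (b : Fin m → ℝ) (φ₁ φ₂ : ℝ → ℝ≥0∞) (ε : ℝ)
    (M : Matrix (Fin q) (Fin p) ℝ) (P : Fin n → Fin m → ℝ) : EReal :=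
  ((-(∑ i, ∑ j, (∑ l, ∑ k, M l k * x i k * y j l) * P i j) : ℝ) : EReal)
    + ((∑ i, ENNReal.ofReal (a i) * φ₁ ((∑ j, P i j) / a i) : ℝ≥0∞) : EReal)
    + ((∑ j, ENNReal.ofReal (b j) * φ₂ ((∑ i, P i j) / b j) : ℝ≥0∞) : EReal)
    + ((ENNReal.ofReal ε *
        ∑ i, ∑ j, ENNReal.ofReal (a i * b j) * phiKL (P i j / (a i * b j)) : ℝ≥0∞) : EReal)

/-- `C(P) = Σ_{ij} P_{ij} y_j x_iᵀ`. -/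
def Cdisc {n m p q : ℕ} (x : Fin n → Fin p → ℝ) (y : Fin m → Fin q → ℝ)
    (P : Fin n → Fin m → ℝ) : Matrix (Fin q) (Fin p) ℝ :=
  Matrix.of fun l k => ∑ i, ∑ j, P i j * y j l * x i k

/-- The closed-form `M`-update `M(P) = r·C(P)/‖C(P)‖_F` (`0` if `C(P) = 0`). -/
def MoptD {n m p q : ℕ} (x : Fin n → Fin p → ℝ) (y : Fin m → Fin q → ℝ) (r : ℝ)
    (P : Fin n → Fin m → ℝ) : Matrix (Fin q) (Fin p) ℝ :=
  if Cdisc x y P = 0 then 0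
  else (r / frobNorm (Cdisc x y P)) • Cdisc x y P

/-- The linear part `M ↦ −Σ_{ij} ⟨Mx_i,y_j⟩ P_{ij}`. -/
def linObj {n m p q : ℕ} (x : Fin n → Fin p → ℝ) (y : Fin m → Fin q → ℝ)
    (M : Matrix (Fin q) (Fin p) ℝ) (P : Fin n → Fin m → ℝ) : ℝ :=
  -(∑ i, ∑ j, (∑ l, ∑ k, M l k * x i k * y j l) * P i j)

-- layer 2 lemmas, appended after defs
lemma sum_rot {α β γ : Type*} [Fintype α] [Fintype β] [Fintype γ] (g : α → β → γ → ℝ) :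
    ∑ i, ∑ l, ∑ k, g i l k = ∑ l, ∑ k, ∑ i, g i l k := by
  rw [Finset.sum_comm]
  exact Finset.sum_congr rfl fun l _ => Finset.sum_comm

lemma sum4_swap {α β γ δ : Type*} [Fintype α] [Fintype β] [Fintype γ] [Fintype δ]
    (f : α → β → γ → δ → ℝ) :
    ∑ i, ∑ j, ∑ l, ∑ k, f i j l k = ∑ l, ∑ k, ∑ i, ∑ j, f i j l k :=
  calc ∑ i, ∑ j, ∑ l, ∑ k, f i j l k
      = ∑ i, ∑ l, ∑ k, ∑ j, f i j l k := Finset.sum_congr rfl fun _ _ => sum_rot _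
    _ = ∑ l, ∑ k, ∑ i, ∑ j, f i j l k := sum_rot _

lemma frobNorm_nonneg' {q p : ℕ} (M : Matrix (Fin q) (Fin p) ℝ) : 0 ≤ frobNorm M :=
  Real.sqrt_nonneg _

lemma frobNorm_pos' {q p : ℕ} {M : Matrix (Fin q) (Fin p) ℝ} (h : M ≠ 0) :
    0 < frobNorm M := by
  obtain ⟨l, k, hlk⟩ : ∃ l k, M l k ≠ 0 := by
    by_contra h'; push_neg at h'
    exact h (by ext l k; simp [h' l k])
  apply Real.sqrt_pos.2
  refine Finset.sum_pos' (fun i _ => Finset.sum_nonneg fun j _ => sq_nonneg _) ?_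
  exact ⟨l, Finset.mem_univ l, Finset.sum_pos' (fun j _ => sq_nonneg _)
    ⟨k, Finset.mem_univ k, by positivity⟩⟩

lemma frobNorm_smul' {q p : ℕ} (c : ℝ) (M : Matrix (Fin q) (Fin p) ℝ) :
    frobNorm (c • M) = |c| * frobNorm M := by
  unfold frobNorm
  have h : ∑ i, ∑ j, ((c • M) i j) ^ 2 = c ^ 2 * ∑ i, ∑ j, (M i j) ^ 2 := by
    simp only [Matrix.smul_apply, smul_eq_mul, mul_pow, Finset.mul_sum]
  rw [h, Real.sqrt_mul (sq_nonneg c), Real.sqrt_sq_eq_abs]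

lemma frobNorm_zero' {q p : ℕ} : frobNorm (0 : Matrix (Fin q) (Fin p) ℝ) = 0 := by
  simp [frobNorm]

lemma sum_mul_le_frob' {q p : ℕ} (M C : Matrix (Fin q) (Fin p) ℝ) :
    ∑ l, ∑ k, M l k * C l k ≤ frobNorm M * frobNorm C := by
  have h := Real.sum_mul_le_sqrt_mul_sqrt Finset.univ
    (fun lk : Fin q × Fin p => M lk.1 lk.2) (fun lk : Fin q × Fin p => C lk.1 lk.2)
  rw [Fintype.sum_prod_type, Fintype.sum_prod_type, Fintype.sum_prod_type] at h
  exact h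

lemma linObj_eq_C {n m p q : ℕ} (x : Fin n → Fin p → ℝ) (y : Fin m → Fin q → ℝ)
    (M : Matrix (Fin q) (Fin p) ℝ) (P : Fin n → Fin m → ℝ) :
    linObj x y M P = -(∑ l, ∑ k, M l k * Cdisc x y P l k) := by
  unfold linObj Cdisc
  congr 1
  simp only [Matrix.of_apply, Finset.sum_mul, Finset.mul_sum]
  rw [sum4_swap]
  exact Finset.sum_congr rfl fun l _ => Finset.sum_congr rfl fun k _ =>
    Finset.sum_congr rfl fun i _ => Finset.sum_congr rfl fun j _ => by ring

lemma frob_sq' {q p : ℕ} (C : Matrix (Fin q) (Fin p) ℝ) :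
    ∑ l, ∑ k, (C l k) ^ 2 = frobNorm C ^ 2 := by
  rw [frobNorm, Real.sq_sqrt]
  exact Finset.sum_nonneg fun i _ => Finset.sum_nonneg fun j _ => sq_nonneg _

lemma linObj_MoptD' {n m p q : ℕ} (x : Fin n → Fin p → ℝ) (y : Fin m → Fin q → ℝ)
    {r : ℝ} (hr : 0 < r) (P : Fin n → Fin m → ℝ) :
    linObj x y (MoptD x y r P) P = -(r * frobNorm (Cdisc x y P)) := by
  rw [linObj_eq_C]
  unfold MoptD
  by_cases hC : Cdisc x y P = 0
  · rw [if_pos hC, hC, frobNorm_zero']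
    simp
  · have hpos := frobNorm_pos' hC
    rw [if_neg hC]
    have hsum : ∑ l, ∑ k, ((r / frobNorm (Cdisc x y P)) • Cdisc x y P) l k * Cdisc x y P l k
        = (r / frobNorm (Cdisc x y P)) * ∑ l, ∑ k, (Cdisc x y P l k) ^ 2 := by
      rw [Finset.mul_sum]
      exact Finset.sum_congr rfl fun l _ => by
        rw [Finset.mul_sum]
        exact Finset.sum_congr rfl fun k _ => by
          simp only [Matrix.smul_apply, smul_eq_mul]; ring
    rw [hsum, frob_sq']
    field_simp

lemma frob_MoptD_le' {n m p q : ℕ} (x : Fin n → Fin p → ℝ) (y : Fin m → Fin q → ℝ)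
    {r : ℝ} (hr : 0 < r) (P : Fin n → Fin m → ℝ) :
    frobNorm (MoptD x y r P) ≤ r := by
  unfold MoptD
  by_cases hC : Cdisc x y P = 0
  · rw [if_pos hC, frobNorm_zero']; exact hr.le
  · have hpos := frobNorm_pos' hC
    rw [if_neg hC, frobNorm_smul', abs_of_nonneg (by positivity)]
    rw [div_mul_cancel₀ _ hpos.ne']

lemma linObj_MoptD_le' {n m p q : ℕ} (x : Fin n → Fin p → ℝ) (y : Fin m → Fin q → ℝ)
    {r : ℝ} (hr : 0 < r) (P : Fin n → Fin m → ℝ)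
    (M : Matrix (Fin q) (Fin p) ℝ) (hM : frobNorm M ≤ r) :
    linObj x y (MoptD x y r P) P ≤ linObj x y M P := by
  rw [linObj_MoptD' x y hr, linObj_eq_C]
  have h1 := sum_mul_le_frob' M (Cdisc x y P)
  have h2 : frobNorm M * frobNorm (Cdisc x y P) ≤ r * frobNorm (Cdisc x y P) :=
    mul_le_mul_of_nonneg_right hM (frobNorm_nonneg' _)
  linarith
lemma lsc_le_liminf' {X : Type*} [TopologicalSpace X] {f : X → ℝ≥0∞}
    (hf : LowerSemicontinuous f) {z : ℕ → X} {x : X}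
    (hz : Tendsto z atTop (nhds x)) :
    f x ≤ Filter.liminf (fun t => f (z t)) Filter.atTop := by
  refine le_of_forall_lt fun c hc => ?_
  obtain ⟨c', hcc', hc'⟩ := exists_between hc
  have h1 : ∀ᶠ t in atTop, c' < f (z t) := hz.eventually (hf x c' hc')
  have h2 : c' ≤ Filter.liminf (fun t => f (z t)) Filter.atTop :=
    le_liminf_of_le (by isBoundedDefault) (h1.mono fun t ht => ht.le)
  exact lt_of_lt_of_le hcc' h2

lemma coe_ennreal_eq_coe_toReal' {z : ℝ≥0∞} (hz : z ≠ ⊤) :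
    ((z : EReal)) = ((z.toReal : ℝ) : EReal) := by
  rw [← EReal.coe_toReal (x := (z : EReal)) (by simpa [EReal.coe_ennreal_eq_top_iff] using hz)
    (EReal.coe_ennreal_ne_bot z), EReal.toReal_coe_ennreal]

lemma ereal_add_coe_le' {α β : ℝ} {z : ℝ≥0∞}
    (h : (α : EReal) + (z : EReal) ≤ (β : EReal)) :
    z ≠ ⊤ ∧ α + z.toReal ≤ β := by
  have hz : z ≠ ⊤ := by
    rintro rfl
    rw [EReal.coe_ennreal_top, EReal.coe_add_top] at h
    exact (EReal.coe_lt_top β).not_ge h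
  refine ⟨hz, ?_⟩
  rw [coe_ennreal_eq_coe_toReal' hz, ← EReal.coe_add, EReal.coe_le_coe_iff] at h
  exact h

lemma key_lim' (u : ℕ → ℝ) (u₀ b : ℝ) (v : ℕ → ℝ≥0∞) (xx : ℝ≥0∞)
    (hu : Tendsto u atTop (nhds u₀))
    (hx : xx ≤ Filter.liminf v Filter.atTop)
    (hb : ∀ᶠ t in atTop, ((u t : ℝ) : EReal) + ((v t : ℝ≥0∞) : EReal) ≤ ((b : ℝ) : EReal)) :
    ((u₀ : ℝ) : EReal) + (xx : EReal) ≤ ((b : ℝ) : EReal) := by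
  have hreal : ∀ᶠ t in atTop, v t ≠ ⊤ ∧ u t + (v t).toReal ≤ b :=
    hb.mono fun t ht => ereal_add_coe_le' ht
  have hub : u₀ ≤ b := by
    refine le_of_tendsto hu (hreal.mono fun t ht => ?_)
    have := ENNReal.toReal_nonneg (a := v t)
    linarith [ht.2]
  have hvb : ∀ᶠ t in atTop, v t ≤ ENNReal.ofReal (b - u t) := by
    refine hreal.mono fun t ht => ?_
    have h0 : (0:ℝ) ≤ b - u t := by
      have := ENNReal.toReal_nonneg (a := v t); linarith [ht.2]
    exact (ENNReal.le_ofReal_iff_toReal_le ht.1 h0).2 (by linarith [ht.2])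
  have hlim : Filter.liminf (fun t => ENNReal.ofReal (b - u t)) Filter.atTop
      = ENNReal.ofReal (b - u₀) := by
    apply Filter.Tendsto.liminf_eq
    exact (ENNReal.continuous_ofReal.tendsto _).comp (tendsto_const_nhds.sub hu)
  have hxb : xx ≤ ENNReal.ofReal (b - u₀) := by
    refine hx.trans ?_
    rw [← hlim]
    exact Filter.liminf_le_liminf hvb
  calc ((u₀ : ℝ) : EReal) + (xx : EReal)
      ≤ ((u₀ : ℝ) : EReal) + ((ENNReal.ofReal (b - u₀) : ℝ≥0∞) : EReal) :=
        add_le_add_right (EReal.coe_ennreal_le_coe_ennreal_iff.2 hxb) _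
    _ = ((b : ℝ) : EReal) := by
        rw [EReal.coe_ennreal_ofReal, max_eq_left (sub_nonneg.2 hub), ← EReal.coe_add]
        norm_num
def EntD {n m : ℕ} (a : Fin n → ℝ) (b : Fin m → ℝ) (φ₁ φ₂ : ℝ → ℝ≥0∞) (ε : ℝ)
    (P : Fin n → Fin m → ℝ) : ℝ≥0∞ :=
  (∑ i, ENNReal.ofReal (a i) * φ₁ ((∑ j, P i j) / a i))
    + (∑ j, ENNReal.ofReal (b j) * φ₂ ((∑ i, P i j) / b j))
    + (ENNReal.ofReal ε * ∑ i, ∑ j, ENNReal.ofReal (a i * b j) * phiKL (P i j / (a i * b j)))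

lemma Jdisc_eq' {n m p q : ℕ} (x : Fin n → Fin p → ℝ) (y : Fin m → Fin q → ℝ)
    (a : Fin n → ℝ) (b : Fin m → ℝ) (φ₁ φ₂ : ℝ → ℝ≥0∞) (ε : ℝ)
    (M : Matrix (Fin q) (Fin p) ℝ) (P : Fin n → Fin m → ℝ) :
    Jdisc x y a b φ₁ φ₂ ε M P
      = ((linObj x y M P : ℝ) : EReal) + ((EntD a b φ₁ φ₂ ε P : ℝ≥0∞) : EReal) := by
  unfold Jdisc EntD linObj
  rw [EReal.coe_ennreal_add, EReal.coe_ennreal_add]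
  abel

lemma apply_continuous {n m : ℕ} (i : Fin n) (j : Fin m) :
    Continuous fun P : Fin n → Fin m → ℝ => P i j :=
  (continuous_apply j).comp (continuous_apply i)

lemma EntD_lsc {n m : ℕ} (a : Fin n → ℝ) (b : Fin m → ℝ) (φ₁ φ₂ : ℝ → ℝ≥0∞) (ε : ℝ)
    (hφ₁ : LowerSemicontinuous φ₁) (hφ₂ : LowerSemicontinuous φ₂) :
    LowerSemicontinuous (EntD a b φ₁ φ₂ ε) := by
  unfold EntD
  refine LowerSemicontinuous.add (LowerSemicontinuous.add ?_ ?_) ?_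
  · refine lowerSemicontinuous_sum fun i _ => ?_
    have hg : Continuous fun P : Fin n → Fin m → ℝ => (∑ j, P i j) / a i :=
      (continuous_finset_sum _ fun j _ => apply_continuous i j).div_const _
    have h1 : LowerSemicontinuous fun P : Fin n → Fin m → ℝ => φ₁ ((∑ j, P i j) / a i) :=
      LowerSemicontinuous.comp hφ₁ hg
    exact (ENNReal.continuous_const_mul ENNReal.ofReal_ne_top).comp_lowerSemicontinuous h1
      (fun u v huv => mul_le_mul_right huv _)
  · refine lowerSemicontinuous_sum fun j _ => ?_
    have hg : Continuous fun P : Fin n → Fin m → ℝ => (∑ i, P i j) / b j :=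
      (continuous_finset_sum _ fun i _ => apply_continuous i j).div_const _
    have h1 : LowerSemicontinuous fun P : Fin n → Fin m → ℝ => φ₂ ((∑ i, P i j) / b j) :=
      LowerSemicontinuous.comp hφ₂ hg
    exact (ENNReal.continuous_const_mul ENNReal.ofReal_ne_top).comp_lowerSemicontinuous h1
      (fun u v huv => mul_le_mul_right huv _)
  · refine Continuous.lowerSemicontinuous ?_
    refine Continuous.comp (ENNReal.continuous_const_mul ENNReal.ofReal_ne_top) ?_
    refine continuous_finset_sum _ fun i _ => continuous_finset_sum _ fun j _ => ?_
    refine Continuous.comp (ENNReal.continuous_const_mul ENNReal.ofReal_ne_top) ?_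
    refine ENNReal.continuous_ofReal.comp ?_
    have hu : Continuous fun P : Fin n → Fin m → ℝ => P i j / (a i * b j) :=
      (apply_continuous i j).div_const _
    exact ((Real.continuous_mul_log.comp hu).sub hu).add continuous_const

lemma linObj_tendsto {n m p q : ℕ} (x : Fin n → Fin p → ℝ) (y : Fin m → Fin q → ℝ)
    {Mt : ℕ → Matrix (Fin q) (Fin p) ℝ} {Pt : ℕ → Fin n → Fin m → ℝ}
    {Mbar : Matrix (Fin q) (Fin p) ℝ} {Pbar : Fin n → Fin m → ℝ}
    (hM : ∀ l k, Tendsto (fun t => Mt t l k) atTop (nhds (Mbar l k)))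
    (hPt : ∀ i j, Tendsto (fun t => Pt t i j) atTop (nhds (Pbar i j))) :
    Tendsto (fun t => linObj x y (Mt t) (Pt t)) atTop (nhds (linObj x y Mbar Pbar)) := by
  unfold linObj
  refine Tendsto.neg ?_
  refine tendsto_finset_sum _ fun i _ => tendsto_finset_sum _ fun j _ => ?_
  refine Tendsto.mul ?_ (hPt i j)
  refine tendsto_finset_sum _ fun l _ => tendsto_finset_sum _ fun k _ => ?_
  exact ((hM l k).mul tendsto_const_nhds).mul tendsto_const_nhds

lemma frobC_tendsto {n m p q : ℕ} (x : Fin n → Fin p → ℝ) (y : Fin m → Fin q → ℝ)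
    {Pt : ℕ → Fin n → Fin m → ℝ} {Pbar : Fin n → Fin m → ℝ}
    (hPt : ∀ i j, Tendsto (fun t => Pt t i j) atTop (nhds (Pbar i j))) :
    Tendsto (fun t => frobNorm (Cdisc x y (Pt t))) atTop
      (nhds (frobNorm (Cdisc x y Pbar))) := by
  unfold frobNorm Cdisc
  refine (Real.continuous_sqrt.tendsto _).comp ?_
  refine tendsto_finset_sum _ fun l _ => tendsto_finset_sum _ fun k _ => ?_
  simp only [Matrix.of_apply]
  refine Tendsto.pow ?_ 2
  refine tendsto_finset_sum _ fun i _ => tendsto_finset_sum _ fun j _ => ?_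
  exact ((hPt i j).mul tendsto_const_nhds).mul tendsto_const_nhds
/-- **Convergence of block coordinate descent for discrete `CR_rUOT_ε`.** Any limit point
`(M̄, P̄)` of the BCD sequence is a blockwise minimum of the objective `J`: `P̄` minimizes
`P ↦ J(P, M̄)` over nonnegative matrices and `M̄` minimizes the linear part over the
Frobenius ball `F_r`; equivalently, a stationary point of the discrete `CR_rUOT_ε`
objective. -/
theorem stmt16 {n m p q : ℕ}
    (x : Fin n → Fin p → ℝ) (y : Fin m → Fin q → ℝ)
    (a : Fin n → ℝ) (b : Fin m → ℝ)
    (ha : ∀ i, 0 < a i) (hb : ∀ j, 0 < b j)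
    (ε r : ℝ) (hε : 0 < ε) (hr : 0 < r)
    (φ₁ φ₂ : ℝ → ℝ≥0∞)
    (hφ₁ : IsEntropyFunction φ₁) (hφ₂ : IsEntropyFunction φ₂)
    (hsl₁ : phiRecession φ₁ = ⊤) (hsl₂ : phiRecession φ₂ = ⊤)
    (Ms : ℕ → Matrix (Fin q) (Fin p) ℝ) (Ps : ℕ → Fin n → Fin m → ℝ)
    (hM0 : frobNorm (Ms 0) ≤ r)
    (hP : ∀ k : ℕ, (∀ i j, 0 ≤ Ps (k + 1) i j) ∧
      (∀ P : Fin n → Fin m → ℝ, (∀ i j, 0 ≤ P i j) →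
        Jdisc x y a b φ₁ φ₂ ε (Ms k) (Ps (k + 1)) ≤ Jdisc x y a b φ₁ φ₂ ε (Ms k) P))
    (hMstep : ∀ k : ℕ, Ms (k + 1) = MoptD x y r (Ps (k + 1)))
    (Mbar : Matrix (Fin q) (Fin p) ℝ) (Pbar : Fin n → Fin m → ℝ)
    (σ : ℕ → ℕ) (hσ : StrictMono σ)
    (hMlim : ∀ l k, Filter.Tendsto (fun t => Ms (σ t) l k) Filter.atTop (nhds (Mbar l k)))
    (hPlim : ∀ i j, Filter.Tendsto (fun t => Ps (σ t) i j) Filter.atTop (nhds (Pbar i j))) :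
    (∀ i j, 0 ≤ Pbar i j) ∧
    (∀ P : Fin n → Fin m → ℝ, (∀ i j, 0 ≤ P i j) →
      Jdisc x y a b φ₁ φ₂ ε Mbar Pbar ≤ Jdisc x y a b φ₁ φ₂ ε Mbar P) ∧
    (∀ M : Matrix (Fin q) (Fin p) ℝ, frobNorm M ≤ r →
      linObj x y Mbar Pbar ≤ linObj x y M Pbar) := by
  have hPt : Tendsto (fun t => Ps (σ t)) atTop (nhds Pbar) :=
    tendsto_pi_nhds.2 fun i => tendsto_pi_nhds.2 fun j => hPlim i j
  have hball : ∀ k, frobNorm (Ms k) ≤ r := by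
    intro k
    cases k with
    | zero => exact hM0
    | succ k => rw [hMstep k]; exact frob_MoptD_le' x y hr _
  have hJM_le : ∀ k, Jdisc x y a b φ₁ φ₂ ε (Ms (k + 1)) (Ps (k + 1)) ≤
      Jdisc x y a b φ₁ φ₂ ε (Ms k) (Ps (k + 1)) := by
    intro k
    rw [Jdisc_eq', Jdisc_eq', hMstep k]
    exact add_le_add_left
      (EReal.coe_le_coe_iff.2 (linObj_MoptD_le' x y hr _ _ (hball k))) _
  have hV : ∀ k : ℕ, Jdisc x y a b φ₁ φ₂ ε (Ms (k + 1)) (Ps (k + 1 + 1)) ≤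
      Jdisc x y a b φ₁ φ₂ ε (Ms k) (Ps (k + 1)) := fun k =>
    le_trans ((hP (k + 1)).2 _ (hP k).1) (hJM_le k)
  have hVanti : Antitone fun k => Jdisc x y a b φ₁ φ₂ ε (Ms k) (Ps (k + 1)) :=
    antitone_nat_of_succ_le hV
  have hchain : ∀ s t : ℕ, s < t →
      Jdisc x y a b φ₁ φ₂ ε (Ms (σ t)) (Ps (σ t)) ≤
      Jdisc x y a b φ₁ φ₂ ε (Ms (σ s)) (Ps (σ s + 1)) := by
    intro s t hst
    have hσlt : σ s < σ t := hσ hst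
    obtain ⟨u, hu⟩ : ∃ u, σ t = u + 1 := ⟨σ t - 1, by omega⟩
    have h1 : σ s ≤ u := by omega
    have h2 : Jdisc x y a b φ₁ φ₂ ε (Ms (σ t)) (Ps (σ t)) ≤
        Jdisc x y a b φ₁ φ₂ ε (Ms u) (Ps (u + 1)) := by
      rw [hu]; exact hJM_le u
    exact le_trans h2 (hVanti h1)
  refine ⟨?_, ?_, ?_⟩
  · -- nonnegativity of Pbar
    intro i j
    refine ge_of_tendsto (hPlim i j) ?_
    filter_upwards [eventually_ge_atTop 1] with t ht
    have hσpos : 0 < σ t := lt_of_lt_of_le ht hσ.le_apply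
    obtain ⟨u, hu⟩ : ∃ u, σ t = u + 1 := ⟨σ t - 1, by omega⟩
    rw [hu]; exact (hP u).1 i j
  · -- Pbar minimizes J(·, Mbar)
    intro P hPge
    by_cases hEP : EntD a b φ₁ φ₂ ε P = ⊤
    · rw [Jdisc_eq' x y a b φ₁ φ₂ ε Mbar P, hEP, EReal.coe_ennreal_top, EReal.coe_add_top]
      exact le_top
    · have hEnt_lsc := EntD_lsc a b φ₁ φ₂ ε hφ₁.2.1 hφ₂.2.1
      have hx := lsc_le_liminf' hEnt_lsc hPt
      have hu := linObj_tendsto x y hMlim hPlim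
      have hkey : ∀ s : ℕ,
          ((linObj x y Mbar Pbar : ℝ) : EReal)
              + ((EntD a b φ₁ φ₂ ε Pbar : ℝ≥0∞) : EReal)
            ≤ ((linObj x y (Ms (σ s)) P + (EntD a b φ₁ φ₂ ε P).toReal : ℝ) : EReal) := by
        intro s
        refine key_lim' _ _ _ _ _ hu hx ?_
        filter_upwards [eventually_ge_atTop (s + 1)] with t ht
        have h1 : Jdisc x y a b φ₁ φ₂ ε (Ms (σ t)) (Ps (σ t)) ≤
            Jdisc x y a b φ₁ φ₂ ε (Ms (σ s)) P :=
          le_trans (hchain s t (by omega)) ((hP (σ s)).2 P hPge)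
        rw [Jdisc_eq', Jdisc_eq'] at h1
        rwa [coe_ennreal_eq_coe_toReal' hEP, ← EReal.coe_add] at h1
      have hfin := (ereal_add_coe_le' (hkey 0)).1
      have hreal : ∀ s, linObj x y Mbar Pbar + (EntD a b φ₁ φ₂ ε Pbar).toReal
          ≤ linObj x y (Ms (σ s)) P + (EntD a b φ₁ φ₂ ε P).toReal :=
        fun s => (ereal_add_coe_le' (hkey s)).2
      have hlimP : Tendsto (fun s => linObj x y (Ms (σ s)) P) atTop
          (nhds (linObj x y Mbar P)) :=
        linObj_tendsto x y hMlim fun i j => tendsto_const_nhds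
      have hfinal : linObj x y Mbar Pbar + (EntD a b φ₁ φ₂ ε Pbar).toReal
          ≤ linObj x y Mbar P + (EntD a b φ₁ φ₂ ε P).toReal :=
        ge_of_tendsto (hlimP.add tendsto_const_nhds) (Eventually.of_forall hreal)
      rw [Jdisc_eq', Jdisc_eq', coe_ennreal_eq_coe_toReal' hEP,
        coe_ennreal_eq_coe_toReal' hfin, ← EReal.coe_add, ← EReal.coe_add]
      exact EReal.coe_le_coe_iff.2 hfinal
  · -- Mbar minimizes the linear part
    have hlin_eq : (fun t => linObj x y (Ms (σ t)) (Ps (σ t)))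
        =ᶠ[atTop] fun t => -(r * frobNorm (Cdisc x y (Ps (σ t)))) := by
      filter_upwards [eventually_ge_atTop 1] with t ht
      have hσpos : 0 < σ t := lt_of_lt_of_le ht hσ.le_apply
      obtain ⟨u, hu⟩ : ∃ u, σ t = u + 1 := ⟨σ t - 1, by omega⟩
      rw [hu, hMstep u, linObj_MoptD' x y hr]
    have h2 := linObj_tendsto x y hMlim hPlim
    have h3 : Tendsto (fun t => -(r * frobNorm (Cdisc x y (Ps (σ t))))) atTop
        (nhds (-(r * frobNorm (Cdisc x y Pbar)))) :=
      ((frobC_tendsto x y hPlim).const_mul r).neg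
    have h4 : linObj x y Mbar Pbar = -(r * frobNorm (Cdisc x y Pbar)) :=
      tendsto_nhds_unique (h2.congr' hlin_eq) h3
    intro M hM
    rw [h4, linObj_eq_C]
    have h5 := sum_mul_le_frob' M (Cdisc x y Pbar)
    have h6 : frobNorm M * frobNorm (Cdisc x y Pbar) ≤ r * frobNorm (Cdisc x y Pbar) :=
      mul_le_mul_of_nonneg_right hM (frobNorm_nonneg' _)
    linarith
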